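/- Let V = ℝ⁴ with dual basis e¹, …, e⁴ of V*. For λ ∈ ℝ and a real 2×2 matrix A = [[a, b],[c, d]], define the 2-form Ω_{λ,A} = λ e¹∧e² + e¹∧(a e³ + b e⁴) − e²∧(c e³ + d e⁴) ∈ Λ²V*. Let λ₂, λ₃ ∈ ℝ and let A₂, A₃ be invertible real 2×2 matrices, and set Ω_i = Ω_{λ_i, A_i} for i = 2, 3. Then the two conditions Ω₂∧Ω₂ = Ω₃∧Ω₃ and Ω₂∧Ω₃ = 0 hold simultaneously if and only if the matrix B = A₂⁻¹A₃ satisfies det(B) = 1 and tr(B) = 0. -/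

import Mathlib

/-- The basis covectors `e¹, …, e⁴` of `V*`, viewed as degree-one elements of the
exterior algebra `Λ(V*)`. -/
noncomputable def E (i : Fin 4) : ExteriorAlgebra ℝ (Fin 4 → ℝ) :=
  ExteriorAlgebra.ι ℝ (Pi.single i 1)

/-- The 2-form `Ω_{λ,A} = λ e¹∧e² + e¹∧(a e³ + b e⁴) − e²∧(c e³ + d e⁴)`, where
`A = [[a, b], [c, d]]`. -/
noncomputable def OmLA (lam : ℝ) (A : Matrix (Fin 2) (Fin 2) ℝ) :
    ExteriorAlgebra ℝ (Fin 4 → ℝ) :=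
  lam • (E 0 * E 1)
    + E 0 * ExteriorAlgebra.ι ℝ (A 0 0 • (Pi.single 2 1 : Fin 4 → ℝ) + A 0 1 • (Pi.single 3 1 : Fin 4 → ℝ))
    - E 1 * ExteriorAlgebra.ι ℝ (A 1 0 • (Pi.single 2 1 : Fin 4 → ℝ) + A 1 1 • (Pi.single 3 1 : Fin 4 → ℝ))

lemma E_swap (i j : Fin 4) : E i * E j = -(E j * E i) := by
  rw [eq_neg_iff_add_eq_zero]; exact ExteriorAlgebra.ι_add_mul_swap _ _

lemma E_swap' (i j : Fin 4) (x : ExteriorAlgebra ℝ (Fin 4 → ℝ)) :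
    E i * (E j * x) = -(E j * (E i * x)) := by
  rw [← mul_assoc, ← mul_assoc, E_swap, neg_mul]

lemma E_sq (i : Fin 4) : E i * E i = 0 := ExteriorAlgebra.ι_sq_zero _

lemma E_sq' (i : Fin 4) (x : ExteriorAlgebra ℝ (Fin 4 → ℝ)) : E i * (E i * x) = 0 := by
  rw [← mul_assoc, E_sq, zero_mul]

lemma E10 : E 1 * E 0 = -(E 0 * E 1) := E_swap _ _
lemma E20 : E 2 * E 0 = -(E 0 * E 2) := E_swap _ _
lemma E21 : E 2 * E 1 = -(E 1 * E 2) := E_swap _ _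
lemma E30 : E 3 * E 0 = -(E 0 * E 3) := E_swap _ _
lemma E31 : E 3 * E 1 = -(E 1 * E 3) := E_swap _ _
lemma E32 : E 3 * E 2 = -(E 2 * E 3) := E_swap _ _
lemma E10' (x) : E 1 * (E 0 * x) = -(E 0 * (E 1 * x)) := E_swap' _ _ _
lemma E20' (x) : E 2 * (E 0 * x) = -(E 0 * (E 2 * x)) := E_swap' _ _ _
lemma E21' (x) : E 2 * (E 1 * x) = -(E 1 * (E 2 * x)) := E_swap' _ _ _
lemma E30' (x) : E 3 * (E 0 * x) = -(E 0 * (E 3 * x)) := E_swap' _ _ _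
lemma E31' (x) : E 3 * (E 1 * x) = -(E 1 * (E 3 * x)) := E_swap' _ _ _
lemma E32' (x) : E 3 * (E 2 * x) = -(E 2 * (E 3 * x)) := E_swap' _ _ _

lemma OmLA_eq (l : ℝ) (A : Matrix (Fin 2) (Fin 2) ℝ) :
    OmLA l A = l • (E 0 * E 1) + A 0 0 • (E 0 * E 2) + A 0 1 • (E 0 * E 3)
      - A 1 0 • (E 1 * E 2) - A 1 1 • (E 1 * E 3) := by
  simp only [OmLA, E, map_add, map_smul, mul_add, mul_smul_comm]
  abel

lemma OmLA_mul (l l' : ℝ) (A A' : Matrix (Fin 2) (Fin 2) ℝ) :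
    OmLA l A * OmLA l' A' =
      (A 0 0 * A' 1 1 + A' 0 0 * A 1 1 - A 0 1 * A' 1 0 - A' 0 1 * A 1 0) •
        (E 0 * (E 1 * (E 2 * E 3))) := by
  rw [OmLA_eq, OmLA_eq]
  simp only [mul_add, add_mul, mul_sub, sub_mul, smul_mul_assoc, mul_smul_comm, smul_smul,
    mul_assoc, E10, E20, E21, E30, E31, E32, E10', E20', E21', E30', E31', E32',
    E_sq, E_sq', mul_neg, neg_neg, smul_neg, mul_zero, smul_zero, zero_mul,
    add_zero, zero_add, neg_zero, zero_sub, sub_zero]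
  module

noncomputable def topF : ∀ i : ℕ, (Fin 4 → ℝ) [⋀^Fin i]→ₗ[ℝ] ℝ
  | 4 => Matrix.detRowAlternating
  | _ => 0

noncomputable def phi : ExteriorAlgebra ℝ (Fin 4 → ℝ) →ₗ[ℝ] ℝ :=
  ExteriorAlgebra.liftAlternating topF

lemma phi_top : phi (E 0 * (E 1 * (E 2 * E 3))) = 1 := by
  have h : E 0 * (E 1 * (E 2 * E 3)) =
      ExteriorAlgebra.ιMulti ℝ 4 (fun i => Pi.single i (1:ℝ)) := by
    simp only [ExteriorAlgebra.ιMulti_apply, List.ofFn_succ, List.ofFn_zero,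
      List.prod_cons, List.prod_nil, mul_one, E, mul_assoc]
    norm_num [Matrix.vecTail, Function.comp]
    rfl
  rw [h, phi, ExteriorAlgebra.liftAlternating_apply_ιMulti]
  show Matrix.detRowAlternating _ = 1
  rw [Matrix.detRowAlternating]
  convert Matrix.det_one (n := Fin 4) using 2
  show Matrix.det (Matrix.of fun i => Pi.single i (1:ℝ)) = _
  congr 1
  ext i j
  simp [Matrix.one_apply, Pi.single_apply, eq_comm]

lemma smul_top_inj (c d : ℝ)
    (h : c • (E 0 * (E 1 * (E 2 * E 3))) = d • (E 0 * (E 1 * (E 2 * E 3)))) : c = d := by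
  have := congrArg phi h
  simpa [map_smul, phi_top] using this

/-- `Θ = Ω₂ + iΩ₃` with `Ω_i = Ω_{λ_i, A_i}` satisfies `Θ∧Θ = 0` (equivalently,
`Ω₂∧Ω₂ = Ω₃∧Ω₃` and `Ω₂∧Ω₃ = 0`) if and only if `B = A₂⁻¹A₃` has `det B = 1` and
`tr B = 0`. -/
theorem holomorphic_symplectic_iff (lam₂ lam₃ : ℝ)
    (A₂ A₃ : Matrix (Fin 2) (Fin 2) ℝ)
    (hA₂ : IsUnit A₂.det) (hA₃ : IsUnit A₃.det)
    (B : Matrix (Fin 2) (Fin 2) ℝ) (hB : B = A₂⁻¹ * A₃) :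
    (OmLA lam₂ A₂ * OmLA lam₂ A₂ = OmLA lam₃ A₃ * OmLA lam₃ A₃ ∧
        OmLA lam₂ A₂ * OmLA lam₃ A₃ = 0) ↔
      (B.det = 1 ∧ B.trace = 0) := by
  have hd2 : A₂.det ≠ 0 := hA₂.ne_zero
  have hscal :
      (OmLA lam₂ A₂ * OmLA lam₂ A₂ = OmLA lam₃ A₃ * OmLA lam₃ A₃ ∧
        OmLA lam₂ A₂ * OmLA lam₃ A₃ = 0) ↔
      ((A₂ 0 0 * A₂ 1 1 + A₂ 0 0 * A₂ 1 1 - A₂ 0 1 * A₂ 1 0 - A₂ 0 1 * A₂ 1 0 : ℝ)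
          = A₃ 0 0 * A₃ 1 1 + A₃ 0 0 * A₃ 1 1 - A₃ 0 1 * A₃ 1 0 - A₃ 0 1 * A₃ 1 0 ∧
        (A₂ 0 0 * A₃ 1 1 + A₃ 0 0 * A₂ 1 1 - A₂ 0 1 * A₃ 1 0 - A₃ 0 1 * A₂ 1 0 : ℝ) = 0) := by
    rw [OmLA_mul, OmLA_mul, OmLA_mul]
    constructor
    · rintro ⟨h1, h2⟩
      refine ⟨smul_top_inj _ _ h1, smul_top_inj _ _ ?_⟩
      rw [h2, zero_smul]
    · rintro ⟨h1, h2⟩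
      rw [h1, h2, zero_smul]
      exact ⟨rfl, rfl⟩
  rw [hscal, hB]
  have hdet : (A₂⁻¹ * A₃).det = A₂.det⁻¹ * A₃.det := by
    rw [Matrix.det_mul, Matrix.det_nonsing_inv, Ring.inverse_eq_inv']
  have htr : (A₂⁻¹ * A₃).trace =
      A₂.det⁻¹ * (A₂ 1 1 * A₃ 0 0 - A₂ 0 1 * A₃ 1 0 + (- A₂ 1 0 * A₃ 0 1 + A₂ 0 0 * A₃ 1 1)) := by
    rw [Matrix.trace_fin_two, Matrix.inv_def, Matrix.adjugate_fin_two, Ring.inverse_eq_inv']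
    simp [Matrix.mul_apply, Fin.sum_univ_two, Matrix.smul_apply]
    ring
  rw [hdet, htr, Matrix.det_fin_two A₂, Matrix.det_fin_two A₃] at *
  constructor
  · rintro ⟨h1, h2⟩
    constructor
    · field_simp
      linarith
    · have : A₂ 1 1 * A₃ 0 0 - A₂ 0 1 * A₃ 1 0 + (-A₂ 1 0 * A₃ 0 1 + A₂ 0 0 * A₃ 1 1) = 0 := by
        linarith
      rw [this, mul_zero]
  · rintro ⟨h1, h2⟩
    have h1' : A₃ 0 0 * A₃ 1 1 - A₃ 0 1 * A₃ 1 0 = A₂ 0 0 * A₂ 1 1 - A₂ 0 1 * A₂ 1 0 := by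
      field_simp at h1
      linarith
    have h2' : A₂ 1 1 * A₃ 0 0 - A₂ 0 1 * A₃ 1 0 + (-A₂ 1 0 * A₃ 0 1 + A₂ 0 0 * A₃ 1 1) = 0 := by
      have := mul_eq_zero.mp h2
      rcases this with h | h
      · exact absurd h (inv_ne_zero hd2)
      · exact h
    exact ⟨by linarith, by linarith⟩
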